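/- For every h ≥ 1, the edge-hyper-Wiener index of the linear polyacene L_h satisfies WW_e(L_h) = h(25h³ + 71h² + 77h + 79)/6; equivalently, 6·WW_e(L_h) = h(25h³ + 71h² + 77h + 79). -/

import Mathlib

open scoped Classical

/-- The linear polyacene `L_h`: the graph of `h` linearly fused hexagons, with vertex set
`{0,…,2h} × {0,1}`, edges joining `(i,j)` and `(i+1,j)`, and edges joining `(i,0)` and `(i,1)`
for every even `i`. -/
def polyacene (h : ℕ) : SimpleGraph (Fin (2 * h + 1) × Fin 2) :=
  SimpleGraph.fromRel (fun u v =>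
    (u.2 = v.2 ∧ (u.1 : ℕ) + 1 = (v.1 : ℕ)) ∨ (u.1 = v.1 ∧ Even (u.1 : ℕ) ∧ u.2 ≠ v.2))

/-- The finset of edges of a graph on a finite vertex type. -/
noncomputable def edgeFS {V : Type*} [Fintype V] (G : SimpleGraph V) : Finset (Sym2 V) :=
  (Set.toFinite G.edgeSet).toFinset

/-- The edge-Wiener index `W_e(G) = Σ_{{e,f} ⊆ E(G)} d(e,f)`, where `d(e,f)` is the distance
between `e` and `f` as vertices of the line graph `L(G)`; the sum over unordered pairs of
distinct edges is computed as half of the sum over ordered pairs of distinct edges. -/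
noncomputable def edgeWienerLine {V : Type*} [Fintype V] (G : SimpleGraph V) : ℚ :=
  letI : Fintype ↥G.edgeSet := (Set.toFinite G.edgeSet).fintype
  (∑ p ∈ (Finset.univ : Finset ↥G.edgeSet).offDiag, (G.lineGraph.dist p.1 p.2 : ℚ)) / 2

/-- The edge-hyper-Wiener index
`WW_e(G) = ½·Σ_{{e,f} ⊆ E(G)} d(e,f) + ½·Σ_{{e,f} ⊆ E(G)} d(e,f)²`, where `d(e,f)` is the
distance in the line graph `L(G)`; sums over unordered pairs of distinct edges (computed as
halves of the corresponding ordered sums). -/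
noncomputable def edgeHyperWienerLine {V : Type*} [Fintype V] (G : SimpleGraph V) : ℚ :=
  letI : Fintype ↥G.edgeSet := (Set.toFinite G.edgeSet).fintype
  (∑ p ∈ (Finset.univ : Finset ↥G.edgeSet).offDiag, (G.lineGraph.dist p.1 p.2 : ℚ)) / 4 +
    (∑ p ∈ (Finset.univ : Finset ↥G.edgeSet).offDiag, (G.lineGraph.dist p.1 p.2 : ℚ) ^ 2) / 4


namespace LineAux
variable {W : Type*} {G : SimpleGraph W}

lemma line_walk_of_walk : ∀ {u v : W} (p : G.Walk u v) (e f : G.edgeSet),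
    u ∈ (e : Sym2 W) → v ∈ (f : Sym2 W) → e ≠ f →
    ∃ P : G.lineGraph.Walk e f, P.length ≤ p.length + 1 := by
  intro u v p
  induction p with
  | nil =>
    intro e f hu hv hef
    have hadj : G.lineGraph.Adj e f := ⟨hef, ⟨_, hu, hv⟩⟩
    exact ⟨hadj.toWalk, by simp⟩
  | @cons a b c hab q ih =>
    intro e f hu hv hef
    set g : G.edgeSet := ⟨s(a, b), hab⟩ with hg
    by_cases hgf : g = f
    · have hadj : G.lineGraph.Adj e f := ⟨hef, ⟨a, hu, by rw [← hgf]; simp [g]⟩⟩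
      exact ⟨hadj.toWalk, by simp⟩
    · have hbg : b ∈ (g : Sym2 W) := by simp [g]
      obtain ⟨P, hP⟩ := ih g f hbg hv hgf
      by_cases hge : g = e
      · subst hge
        exact ⟨P, by simp at hP ⊢; omega⟩
      · have hadj : G.lineGraph.Adj e g := ⟨Ne.symm hge, ⟨a, hu, by simp [g]⟩⟩
        exact ⟨SimpleGraph.Walk.cons hadj P, by simp at hP ⊢; omega⟩

lemma walk_of_line_walk {e f : G.edgeSet} (P : G.lineGraph.Walk e f) (hef : e ≠ f) :
    ∃ u v : W, u ∈ (e : Sym2 W) ∧ v ∈ (f : Sym2 W) ∧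
      ∃ p : G.Walk u v, p.length + 1 ≤ P.length := by
  induction P with
  | nil => exact absurd rfl hef
  | @cons e g f hadj Q ih =>
    obtain ⟨hne, x, hxe, hxg⟩ := hadj
    by_cases hgf : g = f
    · subst hgf
      exact ⟨x, x, hxe, hxg, SimpleGraph.Walk.nil, by show 0 + 1 ≤ Q.length + 1; omega⟩
    · obtain ⟨u', v, hu', hv, p, hp⟩ := ih hgf
      have hr : ∃ r : G.Walk x u', r.length ≤ 1 := by
        by_cases hxu : x = u'
        · subst hxu; exact ⟨SimpleGraph.Walk.nil, by simp⟩
        · have hgs : (g : Sym2 W) = s(x, u') := (Sym2.mem_and_mem_iff hxu).1 ⟨hxg, hu'⟩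
          have hadj' : G.Adj x u' := by
            rw [← SimpleGraph.mem_edgeSet, ← hgs]; exact g.2
          exact ⟨hadj'.toWalk, by simp⟩
      obtain ⟨r, hr1⟩ := hr
      exact ⟨x, v, hxe, hv, r.append p, by simp at hp ⊢; show _ ≤ Q.length + 1; omega⟩
end LineAux

namespace Poly

open Finset

variable {h : ℕ}

abbrev V (h : ℕ) := Fin (2 * h + 1) × Fin 2

lemma adj_iff {u v : V h} : (polyacene h).Adj u v ↔
    ((u.2 : ℕ) = v.2 ∧ Nat.dist (u.1 : ℕ) (v.1 : ℕ) = 1) ∨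
      ((u.1 : ℕ) = (v.1 : ℕ) ∧ (u.1 : ℕ) % 2 = 0 ∧ (u.2 : ℕ) ≠ (v.2 : ℕ)) := by
  rw [polyacene, SimpleGraph.fromRel_adj]
  simp only [ne_eq, Prod.ext_iff, Fin.ext_iff, Nat.even_iff, Nat.dist]
  omega

/-- explicit vertex distance -/
def dv (u v : V h) : ℕ :=
  if (u.2 : ℕ) = (v.2 : ℕ) then Nat.dist (u.1 : ℕ) (v.1 : ℕ)
  else if (u.1 : ℕ) = (v.1 : ℕ) ∧ (u.1 : ℕ) % 2 = 1 then 3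
  else Nat.dist (u.1 : ℕ) (v.1 : ℕ) + 1

lemma row_dist_le {u v : V h} (p : (polyacene h).Walk u v) :
    Nat.dist (u.1 : ℕ) (v.1 : ℕ) ≤ p.length := by
  induction p with
  | nil => simp [Nat.dist]
  | @cons a b c hab q ih =>
    have := adj_iff.1 hab
    simp only [SimpleGraph.Walk.length_cons, Nat.dist] at *
    omega

lemma cross_lower {u v : V h} (p : (polyacene h).Walk u v) (hj : (u.2 : ℕ) ≠ (v.2 : ℕ)) :
    ∃ k : ℕ, k % 2 = 0 ∧ Nat.dist (u.1 : ℕ) k + 1 + Nat.dist k (v.1 : ℕ) ≤ p.length := by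
  induction p with
  | nil => exact absurd rfl hj
  | @cons a b c hab q ih =>
    rcases adj_iff.1 hab with hstep | hstep
    · have hb : (b.2 : ℕ) ≠ (c.2 : ℕ) := by omega
      obtain ⟨k, hk, hle⟩ := ih hb
      refine ⟨k, hk, ?_⟩
      simp only [SimpleGraph.Walk.length_cons, Nat.dist] at *
      omega
    · have := row_dist_le q
      refine ⟨(a.1 : ℕ), hstep.2.1, ?_⟩
      simp only [SimpleGraph.Walk.length_cons, Nat.dist] at *
      omega

lemma dv_le_walk {u v : V h} (p : (polyacene h).Walk u v) : dv u v ≤ p.length := by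
  unfold dv
  split_ifs with h1 h2
  · exact row_dist_le p
  · obtain ⟨k, hk, hle⟩ := cross_lower p h1
    simp only [Nat.dist] at *
    omega
  · obtain ⟨k, hk, hle⟩ := cross_lower p h1
    simp only [Nat.dist] at *
    omega


-- horizontal walk
lemma walk_horiz : ∀ (d : ℕ) (a b : Fin (2*h+1)) (j : Fin 2), Nat.dist (a:ℕ) (b:ℕ) = d →
    ∃ p : (polyacene h).Walk (a, j) (b, j), p.length = d := by
  intro d
  induction d with
  | zero =>
    intro a b j hd
    have : a = b := by
      apply Fin.ext; simp [Nat.dist] at hd; omega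
    subst this
    exact ⟨SimpleGraph.Walk.nil, rfl⟩
  | succ n ih =>
    intro a b j hd
    rcases lt_or_gt_of_ne (show (a:ℕ) ≠ (b:ℕ) by simp [Nat.dist] at hd; omega) with hlt | hlt
    · have hb : (a:ℕ)+1 < 2*h+1 := by omega
      have hadj : (polyacene h).Adj (a, j) (⟨(a:ℕ)+1, hb⟩, j) := by
        rw [adj_iff]; left; simp [Nat.dist]
      obtain ⟨p, hp⟩ := ih ⟨(a:ℕ)+1, hb⟩ b j (by simp [Nat.dist] at *; omega)
      exact ⟨SimpleGraph.Walk.cons hadj p, by simp [hp]⟩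
    · have hb : (a:ℕ)-1 < 2*h+1 := by omega
      have hadj : (polyacene h).Adj (a, j) (⟨(a:ℕ)-1, hb⟩, j) := by
        rw [adj_iff]; left; simp [Nat.dist]; omega
      obtain ⟨p, hp⟩ := ih ⟨(a:ℕ)-1, hb⟩ b j (by simp [Nat.dist] at *; omega)
      exact ⟨SimpleGraph.Walk.cons hadj p, by simp [hp]⟩

lemma walk_cross (a b : Fin (2*h+1)) (j j' : Fin 2) (hj : (j:ℕ) ≠ (j':ℕ)) :
    ∃ p : (polyacene h).Walk (a, j) (b, j'), p.length = dv (a, j) (b, j') := by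
  have hdv : dv (a, j) (b, j') =
      (if (a:ℕ) = (b:ℕ) ∧ (a:ℕ) % 2 = 1 then 3 else Nat.dist (a:ℕ) (b:ℕ) + 1) := by
    unfold dv; simp only []
    rw [if_neg hj]
  by_cases hsp : (a:ℕ) = (b:ℕ) ∧ (a:ℕ) % 2 = 1
  · -- length 3 : a → a-1 → (a-1, j') → (a, j')
    have h1 : (a:ℕ) - 1 < 2*h+1 := by omega
    set a' : Fin (2*h+1) := ⟨(a:ℕ)-1, h1⟩ with ha'
    have e1 : (polyacene h).Adj (a, j) (a', j) := by
      rw [adj_iff]; left; constructor; rfl; simp [Nat.dist, a']; omega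
    have e2 : (polyacene h).Adj (a', j) (a', j') := by
      rw [adj_iff]; right; refine ⟨rfl, ?_, hj⟩; simp [a']; omega
    have e3 : (polyacene h).Adj (a', j') (b, j') := by
      rw [adj_iff]; left; refine ⟨rfl, ?_⟩; simp [Nat.dist, a']; omega
    refine ⟨SimpleGraph.Walk.cons e1 (SimpleGraph.Walk.cons e2
      (SimpleGraph.Walk.cons e3 SimpleGraph.Walk.nil)), ?_⟩
    rw [hdv, if_pos hsp]; rfl
  · rw [hdv, if_neg hsp]
    by_cases hev : (a:ℕ) % 2 = 0
    · -- rung at a then horizontal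
      have e1 : (polyacene h).Adj (a, j) (a, j') := by
        rw [adj_iff]; right; exact ⟨rfl, hev, hj⟩
      obtain ⟨p, hp⟩ := walk_horiz (Nat.dist (a:ℕ) (b:ℕ)) a b j' rfl
      exact ⟨SimpleGraph.Walk.cons e1 p, by simp [hp]⟩
    · -- a odd, b ≠ a
      have hab : (a:ℕ) ≠ (b:ℕ) := by intro he; exact hsp ⟨he, by omega⟩
      rcases lt_or_gt_of_ne hab with hlt | hlt
      · -- go right to a+1 (even), rung, horizontal
        have h1 : (a:ℕ)+1 < 2*h+1 := by omega
        set a' : Fin (2*h+1) := ⟨(a:ℕ)+1, h1⟩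
        have e1 : (polyacene h).Adj (a, j) (a', j) := by
          rw [adj_iff]; left; refine ⟨rfl, ?_⟩; simp [Nat.dist, a']
        have e2 : (polyacene h).Adj (a', j) (a', j') := by
          rw [adj_iff]; right; refine ⟨rfl, ?_, hj⟩; simp [a']; omega
        obtain ⟨p, hp⟩ := walk_horiz (Nat.dist ((a:ℕ)+1) (b:ℕ)) a' b j' (by simp [a'])
        refine ⟨SimpleGraph.Walk.cons e1 (SimpleGraph.Walk.cons e2 p), ?_⟩
        simp [hp, Nat.dist]; omega
      · have h1 : (a:ℕ)-1 < 2*h+1 := by omega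
        set a' : Fin (2*h+1) := ⟨(a:ℕ)-1, h1⟩
        have e1 : (polyacene h).Adj (a, j) (a', j) := by
          rw [adj_iff]; left; refine ⟨rfl, ?_⟩; simp [Nat.dist, a']; omega
        have e2 : (polyacene h).Adj (a', j) (a', j') := by
          rw [adj_iff]; right; refine ⟨rfl, ?_, hj⟩; simp [a']; omega
        obtain ⟨p, hp⟩ := walk_horiz (Nat.dist ((a:ℕ)-1) (b:ℕ)) a' b j' (by simp [a'])
        refine ⟨SimpleGraph.Walk.cons e1 (SimpleGraph.Walk.cons e2 p), ?_⟩
        simp [hp, Nat.dist]; omega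

lemma exists_walk_dv (u v : V h) : ∃ p : (polyacene h).Walk u v, p.length = dv u v := by
  obtain ⟨a, j⟩ := u; obtain ⟨b, j'⟩ := v
  by_cases hj : (j:ℕ) = (j':ℕ)
  · have : j = j' := Fin.ext hj
    subst this
    obtain ⟨p, hp⟩ := walk_horiz (Nat.dist (a:ℕ) (b:ℕ)) a b j rfl
    exact ⟨p, by rw [hp]; unfold dv; rw [if_pos rfl]⟩
  · obtain ⟨p, hp⟩ := walk_cross a b j j' hj
    exact ⟨p, hp⟩

/-- Edge index type -/
abbrev I (h : ℕ) := (Fin (2*h) × Fin 2) ⊕ Fin (h+1)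

def endA : I h → V h
  | .inl (i, j) => (⟨(i:ℕ), by omega⟩, j)
  | .inr t => (⟨2*(t:ℕ), by omega⟩, 0)

def endB : I h → V h
  | .inl (i, j) => (⟨(i:ℕ)+1, by omega⟩, j)
  | .inr t => (⟨2*(t:ℕ), by omega⟩, 1)

lemma adjAB (a : I h) : (polyacene h).Adj (endA a) (endB a) := by
  rcases a with ⟨i, j⟩ | t
  · rw [adj_iff]; left; simp [endA, endB, Nat.dist]
  · rw [adj_iff]; right; simp [endA, endB]

def edgeOf (a : I h) : (polyacene h).edgeSet := ⟨s(endA a, endB a), adjAB a⟩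

lemma edgeOf_inj : Function.Injective (edgeOf (h := h)) := by
  intro a b hab
  have hs : s(endA a, endB a) = s(endA b, endB b) := congrArg Subtype.val hab
  rw [Sym2.eq_iff] at hs
  rcases a with ⟨i, j⟩ | t <;> rcases b with ⟨i', j'⟩ | t' <;>
    simp only [endA, endB, Prod.ext_iff, Fin.ext_iff, Fin.val_zero, Fin.val_one] at hs
  · simp only [Sum.inl.injEq, Prod.ext_iff, Fin.ext_iff]; omega
  · exfalso; omega
  · exfalso; omega
  · simp only [Sum.inr.injEq, Fin.ext_iff]; omega

lemma edgeOf_surj : Function.Surjective (edgeOf (h := h)) := by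
  rintro ⟨e, he⟩
  induction e using Sym2.ind with
  | _ u v =>
  rw [SimpleGraph.mem_edgeSet] at he
  have hu2 := u.2.isLt
  have hv2 := v.2.isLt
  have hu1 := u.1.isLt
  have hv1 := v.1.isLt
  rcases adj_iff.1 he with ⟨hrow, hd⟩ | ⟨hcol, hev, hne⟩
  · rcases (by simp [Nat.dist] at hd; omega : (u.1:ℕ) + 1 = (v.1:ℕ) ∨ (v.1:ℕ) + 1 = (u.1:ℕ))
      with hc | hc
    · refine ⟨.inl (⟨(u.1:ℕ), by omega⟩, u.2), Subtype.ext ?_⟩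
      show s(_, _) = s(_, _)
      simp only [endA, endB, Sym2.eq_iff, Prod.ext_iff, Fin.ext_iff, true_and, and_true]
      omega
    · refine ⟨.inl (⟨(v.1:ℕ), by omega⟩, u.2), Subtype.ext ?_⟩
      show s(_, _) = s(_, _)
      simp only [endA, endB, Sym2.eq_iff, Prod.ext_iff, Fin.ext_iff, true_and, and_true]
      omega
  · refine ⟨.inr ⟨(u.1:ℕ)/2, by omega⟩, Subtype.ext ?_⟩
    show s(_, _) = s(_, _)
    simp only [endA, endB, Sym2.eq_iff, Prod.ext_iff, Fin.ext_iff, Fin.val_zero, Fin.val_one]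
    omega

def crossD (x y : ℕ) : ℕ :=
  if x = y then 2
  else if Nat.dist x y = 1 then (if (max x y) % 2 = 0 then 2 else 3)
  else Nat.dist x y + 1

def hvD (x t : ℕ) : ℕ := max (x + 1 - 2*t) (2*t - x)

def DL : I h → I h → ℕ
  | .inl (i,j), .inl (i',j') =>
      if (j:ℕ) = (j':ℕ) then Nat.dist (i:ℕ) (i':ℕ) else crossD (i:ℕ) (i':ℕ)
  | .inl (i,_), .inr t => hvD (i:ℕ) (t:ℕ)
  | .inr t, .inl (i,_) => hvD (i:ℕ) (t:ℕ)
  | .inr t, .inr t' => 2 * Nat.dist (t:ℕ) (t':ℕ) + 1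

set_option maxHeartbeats 2000000 in
lemma DL_eq_min (a b : I h) (hab : a ≠ b) :
    DL a b = min (min (dv (endA a) (endA b)) (dv (endA a) (endB b)))
      (min (dv (endB a) (endA b)) (dv (endB a) (endB b))) + 1 := by
  have hne := hab
  rcases a with ⟨i, j⟩ | t <;> rcases b with ⟨i', j'⟩ | t'
  · have hj := j.isLt; have hj' := j'.isLt
    simp only [ne_eq, Sum.inl.injEq, Prod.ext_iff, Fin.ext_iff, not_and] at hne
    simp only [DL, dv, crossD]
    split_ifs <;> simp only [endA, endB, Nat.dist] at * <;> omega
  · have hj := j.isLt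
    simp only [DL, dv, hvD]
    split_ifs <;> simp only [endA, endB, Nat.dist, Fin.val_zero, Fin.val_one] at * <;> omega
  · have hj := j'.isLt
    simp only [DL, dv, hvD]
    split_ifs <;> simp only [endA, endB, Nat.dist, Fin.val_zero, Fin.val_one] at * <;> omega
  · simp only [ne_eq, Sum.inr.injEq, Fin.ext_iff] at hne
    simp only [DL, dv]
    split_ifs <;> simp only [endA, endB, Nat.dist, Fin.val_zero, Fin.val_one, zero_ne_one, one_ne_zero, not_true_eq_false] at * <;> omega

theorem lineDist (a b : I h) (hab : a ≠ b) :
    (polyacene h).lineGraph.dist (edgeOf a) (edgeOf b) = DL a b := by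
  have hef : edgeOf a ≠ edgeOf b := fun hc => hab (edgeOf_inj hc)
  have mA : ∀ c : I h, endA c ∈ (edgeOf c : Sym2 (V h)) := fun c => by
    simp [edgeOf]
  have mB : ∀ c : I h, endB c ∈ (edgeOf c : Sym2 (V h)) := fun c => by
    simp [edgeOf]
  have hub : ∀ u v : V h, u ∈ (edgeOf a : Sym2 (V h)) → v ∈ (edgeOf b : Sym2 (V h)) →
      (polyacene h).lineGraph.dist (edgeOf a) (edgeOf b) ≤ dv u v + 1 := by
    intro u v hu hv
    obtain ⟨p, hp⟩ := exists_walk_dv u v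
    obtain ⟨P, hP⟩ := LineAux.line_walk_of_walk p _ _ hu hv hef
    exact le_trans (SimpleGraph.dist_le P) (by omega)
  have hlb : ∃ u v : V h, u ∈ (edgeOf a : Sym2 (V h)) ∧ v ∈ (edgeOf b : Sym2 (V h)) ∧
      dv u v + 1 ≤ (polyacene h).lineGraph.dist (edgeOf a) (edgeOf b) := by
    have hd0 : (polyacene h).lineGraph.dist (edgeOf a) (edgeOf b) ≠ 0 := by
      have hr : (polyacene h).lineGraph.Reachable (edgeOf a) (edgeOf b) := by
        obtain ⟨p, hp⟩ := exists_walk_dv (endA a) (endA b)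
        obtain ⟨P, hP⟩ := LineAux.line_walk_of_walk p _ _ (mA a) (mA b) hef
        exact ⟨P⟩
      rw [SimpleGraph.dist_ne_zero_iff_ne_and_reachable]
      exact ⟨hef, hr⟩
    obtain ⟨P, hP⟩ := SimpleGraph.exists_walk_of_dist_ne_zero hd0
    obtain ⟨u, v, hu, hv, p, hp⟩ := LineAux.walk_of_line_walk P hef
    exact ⟨u, v, hu, hv, by have := dv_le_walk p; omega⟩
  rw [DL_eq_min a b hab]
  have h1 := hub _ _ (mA a) (mA b)
  have h2 := hub _ _ (mA a) (mB b)
  have h3 := hub _ _ (mB a) (mA b)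
  have h4 := hub _ _ (mB a) (mB b)
  obtain ⟨u, v, hu, hv, hl⟩ := hlb
  have hu' : u = endA a ∨ u = endB a := Sym2.mem_iff.1 hu
  have hv' : v = endA b ∨ v = endB b := Sym2.mem_iff.1 hv
  rcases hu' with rfl | rfl <;> rcases hv' with rfl | rfl <;> omega

def qq (m : ℕ) : ℚ := (m:ℚ) + (m:ℚ)^2

lemma P1 (n : ℕ) : ∑ d ∈ range n, qq (d+1) = (2*(n:ℚ) + 3*n^2 + n^3)/3 := by
  induction n with
  | zero => norm_num
  | succ n ih => rw [sum_range_succ, ih]; unfold qq; push_cast; ring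

lemma P3 (n : ℕ) : ∑ d ∈ range n, qq (d+3) = (26*(n:ℚ) + 9*n^2 + n^3)/3 := by
  induction n with
  | zero => norm_num
  | succ n ih => rw [sum_range_succ, ih]; unfold qq; push_cast; ring

lemma P4 (n : ℕ) : ∑ d ∈ range n, qq (2*d+1) = (-(n:ℚ) + 3*n^2 + 4*n^3)/3 := by
  induction n with
  | zero => norm_num
  | succ n ih => rw [sum_range_succ, ih]; unfold qq; push_cast; ring

lemma P5 (n : ℕ) : ∑ d ∈ range n, qq (2*d+2) = (5*(n:ℚ) + 9*n^2 + 4*n^3)/3 := by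
  induction n with
  | zero => norm_num
  | succ n ih => rw [sum_range_succ, ih]; unfold qq; push_cast; ring

lemma P6 (n : ℕ) : ∑ d ∈ range n, qq (2*d+3) = (17*(n:ℚ) + 15*n^2 + 4*n^3)/3 := by
  induction n with
  | zero => norm_num
  | succ n ih => rw [sum_range_succ, ih]; unfold qq; push_cast; ring

def BsameQ (n : ℕ) : ℚ := ∑ i ∈ range n, ∑ i' ∈ range n, if i = i' then 0 else qq (Nat.dist i i')

lemma Bsame_cf (n : ℕ) :
    BsameQ n = (-2*(n:ℚ) - n^2 + 2*n^3 + n^4)/6 := by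
  induction n with
  | zero => norm_num [BsameQ]
  | succ n ih =>
    have hrow : ∑ i ∈ range n, (if i = n then (0:ℚ) else qq (Nat.dist i n))
        = ∑ d ∈ range n, qq (d+1) := by
      rw [← Finset.sum_range_reflect (fun d => qq (d+1)) n]
      refine Finset.sum_congr rfl fun i hi => ?_
      rw [mem_range] at hi
      rw [if_neg (by omega)]
      have : Nat.dist i n = (n - 1 - i) + 1 := by simp [Nat.dist]; omega
      rw [this]
    have hrow' : ∑ i ∈ range n, (if (n:ℕ) = i then (0:ℚ) else qq (Nat.dist n i))
        = ∑ d ∈ range n, qq (d+1) := by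
      rw [← hrow]
      refine Finset.sum_congr rfl fun i hi => ?_
      rw [mem_range] at hi
      rw [Nat.dist_comm]
      by_cases hin : i = n
      · omega
      · rw [if_neg (by omega), if_neg hin]
    have expand : BsameQ (n+1) = BsameQ n
        + (∑ i ∈ range n, if i = n then (0:ℚ) else qq (Nat.dist i n))
        + (∑ i ∈ range n, if (n:ℕ) = i then (0:ℚ) else qq (Nat.dist n i)) := by
      unfold BsameQ
      rw [sum_range_succ, sum_range_succ]
      rw [if_pos rfl]
      rw [Finset.sum_congr rfl (fun i (hi : i ∈ range n) =>
        (sum_range_succ (fun i' => if i = i' then (0:ℚ) else qq (Nat.dist i i')) n))]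
      rw [Finset.sum_add_distrib]
      ring
    rw [expand, hrow, hrow', ih, P1]
    push_cast
    ring

def BcQ (n : ℕ) : ℚ := ∑ i ∈ range n, ∑ i' ∈ range n, qq (crossD i i')

lemma crossD_comm (x y : ℕ) : crossD x y = crossD y x := by
  simp only [crossD]
  split_ifs <;> simp only [Nat.dist] at * <;> omega

lemma BcQ_step (n : ℕ) : BcQ (n+1) = BcQ n + 2 * (∑ i ∈ range n, qq (crossD i n)) + 6 := by
  have hdiag : qq (crossD n n) = 6 := by
    have : crossD n n = 2 := by simp [crossD]
    rw [this]; norm_num [qq]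
  have hsym : ∑ i ∈ range n, qq (crossD n i) = ∑ i ∈ range n, qq (crossD i n) :=
    Finset.sum_congr rfl fun i _ => by rw [crossD_comm]
  unfold BcQ
  rw [sum_range_succ, sum_range_succ]
  rw [Finset.sum_congr rfl (fun i (hi : i ∈ range n) =>
    (sum_range_succ (fun i' => qq (crossD i i')) n))]
  rw [Finset.sum_add_distrib, hsym, hdiag]
  ring

lemma row_even (n : ℕ) (hn : n % 2 = 0) :
    ∑ i ∈ range n, qq (crossD i n) = ∑ d ∈ range n, qq (d+2) := by
  rw [← Finset.sum_range_reflect (fun d => qq (d+2)) n]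
  refine Finset.sum_congr rfl fun i hi => ?_
  rw [mem_range] at hi
  have : crossD i n = (n - 1 - i) + 2 := by
    simp only [crossD]; split_ifs <;> (try simp only [Nat.dist] at *) <;> omega
  rw [this]

lemma row_odd (m : ℕ) (hm : m % 2 = 0) :
    ∑ i ∈ range (m+1), qq (crossD i (m+1)) = (∑ d ∈ range m, qq (d+3)) + qq 3 := by
  rw [sum_range_succ]
  have hlast : crossD m (m+1) = 3 := by
    simp only [crossD]; split_ifs <;> (try simp only [Nat.dist] at *) <;> omega
  rw [hlast]
  congr 1
  rw [← Finset.sum_range_reflect (fun d => qq (d+3)) m]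
  refine Finset.sum_congr rfl fun i hi => ?_
  rw [mem_range] at hi
  have : crossD i (m+1) = (m - 1 - i) + 3 := by
    simp only [crossD]; split_ifs <;> (try simp only [Nat.dist] at *) <;> omega
  rw [this]

lemma P2 (n : ℕ) : ∑ d ∈ range n, qq (d+2) = (11*(n:ℚ) + 6*n^2 + n^3)/3 := by
  induction n with
  | zero => norm_num
  | succ n ih => rw [sum_range_succ, ih]; unfold qq; push_cast; ring

lemma Bc_cf (h : ℕ) : BcQ (2*h) = (54*(h:ℚ) + 22*h^2 + 24*h^3 + 8*h^4)/3 := by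
  induction h with
  | zero => norm_num [BcQ]
  | succ h ih =>
    have e2 : 2*(h+1) = (2*h+1)+1 := by ring
    rw [e2, BcQ_step, BcQ_step, ih]
    rw [row_even (2*h) (by omega), row_odd (2*h) (by omega)]
    rw [P2, P3]
    have : qq 3 = 12 := by norm_num [qq]
    rw [this]
    push_cast
    ring

def FQ (h : ℕ) : ℚ := ∑ i ∈ range (2*h), ∑ t ∈ range (h+1), qq (hvD i t)

lemma FQ_cf (h : ℕ) : FQ h = (8*(h:ℚ) + 20*h^2 + 16*h^3 + 4*h^4)/3 := by
  induction h with
  | zero => norm_num [FQ]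
  | succ h ih =>
    have expand : FQ (h+1) = FQ h
        + (∑ i ∈ range (2*h+2), qq (hvD i (h+1)))
        + (∑ t ∈ range (h+1), qq (hvD (2*h) t))
        + (∑ t ∈ range (h+1), qq (hvD (2*h+1) t)) := by
      unfold FQ
      have e2 : 2*(h+1) = (2*h+1)+1 := by ring
      rw [e2]
      rw [Finset.sum_congr rfl (fun i (hi : i ∈ range ((2*h+1)+1)) =>
        (sum_range_succ (fun t => qq (hvD i t)) (h+1)))]
      rw [Finset.sum_add_distrib]
      rw [sum_range_succ, sum_range_succ]
      have : (2*h+1)+1 = 2*h+2 := rfl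
      rw [this]
      ring
    have hA : ∑ i ∈ range (2*h+2), qq (hvD i (h+1)) = ∑ d ∈ range (2*h+2), qq (d+1) := by
      rw [← Finset.sum_range_reflect (fun d => qq (d+1)) (2*h+2)]
      refine Finset.sum_congr rfl fun i hi => ?_
      rw [mem_range] at hi
      have : hvD i (h+1) = (2*h+2 - 1 - i) + 1 := by
        simp only [hvD]; omega
      rw [this]
    have hB : ∑ t ∈ range (h+1), qq (hvD (2*h) t) = ∑ s ∈ range (h+1), qq (2*s+1) := by
      rw [← Finset.sum_range_reflect (fun s => qq (2*s+1)) (h+1)]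
      refine Finset.sum_congr rfl fun t ht => ?_
      rw [mem_range] at ht
      have : hvD (2*h) t = 2*(h+1-1-t)+1 := by
        simp only [hvD]; omega
      rw [this]
    have hC : ∑ t ∈ range (h+1), qq (hvD (2*h+1) t) = ∑ s ∈ range (h+1), qq (2*s+2) := by
      rw [← Finset.sum_range_reflect (fun s => qq (2*s+2)) (h+1)]
      refine Finset.sum_congr rfl fun t ht => ?_
      rw [mem_range] at ht
      have : hvD (2*h+1) t = 2*(h+1-1-t)+2 := by
        simp only [hvD]; omega
      rw [this]
    rw [expand, hA, hB, hC, ih, P1, P4, P5]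
    push_cast
    ring

def BvQ (m : ℕ) : ℚ := ∑ t ∈ range m, ∑ t' ∈ range m, if t = t' then 0 else qq (2*Nat.dist t t' + 1)

lemma Bv_cf (m : ℕ) : BvQ m = (-12*(m:ℚ) + 4*m^2 + 6*m^3 + 2*m^4)/3 := by
  induction m with
  | zero => norm_num [BvQ]
  | succ m ih =>
    have hrow : ∑ t ∈ range m, (if t = m then (0:ℚ) else qq (2*Nat.dist t m + 1))
        = ∑ d ∈ range m, qq (2*d+3) := by
      rw [← Finset.sum_range_reflect (fun d => qq (2*d+3)) m]
      refine Finset.sum_congr rfl fun t ht => ?_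
      rw [mem_range] at ht
      rw [if_neg (by omega)]
      have : 2*Nat.dist t m + 1 = 2*(m-1-t)+3 := by simp [Nat.dist]; omega
      rw [this]
    have hrow' : ∑ t ∈ range m, (if (m:ℕ) = t then (0:ℚ) else qq (2*Nat.dist m t + 1))
        = ∑ d ∈ range m, qq (2*d+3) := by
      rw [← hrow]
      refine Finset.sum_congr rfl fun t ht => ?_
      rw [mem_range] at ht
      rw [Nat.dist_comm]
      by_cases htm : t = m
      · omega
      · rw [if_neg (by omega), if_neg htm]
    have expand : BvQ (m+1) = BvQ m
        + (∑ t ∈ range m, if t = m then (0:ℚ) else qq (2*Nat.dist t m + 1))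
        + (∑ t ∈ range m, if (m:ℕ) = t then (0:ℚ) else qq (2*Nat.dist m t + 1)) := by
      unfold BvQ
      rw [sum_range_succ, sum_range_succ, if_pos rfl]
      rw [Finset.sum_congr rfl (fun t (ht : t ∈ range m) =>
        (sum_range_succ (fun t' => if t = t' then (0:ℚ) else qq (2*Nat.dist t t' + 1)) m))]
      rw [Finset.sum_add_distrib]
      ring
    rw [expand, hrow, hrow', ih, P6]
    push_cast
    ring

lemma total_cf (h : ℕ) :
    2*BsameQ (2*h) + 2*BcQ (2*h) + 4*FQ h + BvQ (h+1)
      = 2*(h:ℚ)*(25*h^3 + 71*h^2 + 77*h + 79)/3 := by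
  rw [Bsame_cf, Bc_cf, FQ_cf, Bv_cf]
  push_cast
  ring


noncomputable def sigma (h : ℕ) : I h ≃ (polyacene h).edgeSet :=
  Equiv.ofBijective edgeOf ⟨edgeOf_inj, edgeOf_surj⟩

lemma lineDist' {h : ℕ} (a b : I h) (hab : a ≠ b) :
    (polyacene h).lineGraph.dist (sigma h a) (sigma h b) = DL a b :=
  lineDist a b hab

lemma sum2_equiv {α β : Type*} [Fintype α] [Fintype β] (σ : α ≃ β) (F : β → β → ℚ) :
    (∑ a : β, ∑ b : β, F a b) = ∑ x : α, ∑ y : α, F (σ x) (σ y) := by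
  rw [← Equiv.sum_comp σ (fun a => ∑ b, F a b)]
  exact Finset.sum_congr rfl fun x _ => (Equiv.sum_comp σ (F (σ x))).symm

lemma sum2_equiv' {α β : Type*} (iA : Fintype α) (iB : Fintype β) (σ : α ≃ β)
    (F : β → β → ℚ) :
    (∑ a ∈ @Finset.univ β iB, ∑ b ∈ @Finset.univ β iB, F a b)
      = ∑ x ∈ @Finset.univ α iA, ∑ y ∈ @Finset.univ α iA, F (σ x) (σ y) := by
  letI := iA; letI := iB
  exact sum2_equiv σ F

lemma offDiag_sum {α : Type*} [Fintype α] [DecidableEq α] (F : α × α → ℚ) :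
    ∑ p ∈ (Finset.univ : Finset α).offDiag, F p
      = ∑ a, ∑ b, if a = b then 0 else F (a, b) := by
  rw [show (Finset.univ : Finset α).offDiag
      = (Finset.univ ×ˢ Finset.univ).filter (fun p : α × α => p.1 ≠ p.2) from by ext; simp]
  rw [Finset.sum_filter, Finset.sum_product]
  refine Finset.sum_congr rfl fun a _ => Finset.sum_congr rfl fun b _ => ?_
  by_cases hab : a = b <;> simp [hab]

lemma offDiag_sum' {α : Type*} (iF : Fintype α) (iD : DecidableEq α) (F : α × α → ℚ) :
    ∑ p ∈ (@Finset.univ α iF).offDiag, F p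
      = ∑ a ∈ @Finset.univ α iF, ∑ b ∈ @Finset.univ α iF,
          if a = b then (0:ℚ) else F (a, b) := by
  letI := iF; letI := iD
  exact offDiag_sum F

lemma blocks (h : ℕ) :
    (∑ x : I h, ∑ y : I h, if x = y then 0 else qq (DL x y))
      = 2*BsameQ (2*h) + 2*BcQ (2*h) + 4*FQ h + BvQ (h+1) := by
  simp only [Fintype.sum_sum_type, Fintype.sum_prod_type, Fin.sum_univ_two]
  simp only [DL, Sum.inl.injEq, Sum.inr.injEq, Prod.mk.injEq, Fin.ext_iff,
    Fin.val_zero, Fin.val_one, reduceCtorEq, if_false, if_true, and_true, and_false]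
  simp only [Finset.sum_add_distrib]
  have e1 : (∑ x : Fin (2*h), ∑ y : Fin (2*h),
      if (x:ℕ) = (y:ℕ) then (0:ℚ) else qq (Nat.dist (x:ℕ) (y:ℕ))) = BsameQ (2*h) := by
    rw [Fin.sum_univ_eq_sum_range
      (fun i => ∑ y : Fin (2*h), if i = (y:ℕ) then (0:ℚ) else qq (Nat.dist i (y:ℕ)))]
    exact Finset.sum_congr rfl fun i _ => Fin.sum_univ_eq_sum_range
      (fun j => if i = j then (0:ℚ) else qq (Nat.dist i j)) (2*h)
  have e2 : (∑ x : Fin (2*h), ∑ y : Fin (2*h), qq (crossD (x:ℕ) (y:ℕ))) = BcQ (2*h) := by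
    rw [Fin.sum_univ_eq_sum_range (fun i => ∑ y : Fin (2*h), qq (crossD i (y:ℕ)))]
    exact Finset.sum_congr rfl fun i _ => Fin.sum_univ_eq_sum_range
      (fun j => qq (crossD i j)) (2*h)
  have e3 : (∑ x : Fin (2*h), ∑ y : Fin (h+1), qq (hvD (x:ℕ) (y:ℕ))) = FQ h := by
    rw [Fin.sum_univ_eq_sum_range (fun i => ∑ y : Fin (h+1), qq (hvD i (y:ℕ)))]
    exact Finset.sum_congr rfl fun i _ => Fin.sum_univ_eq_sum_range
      (fun j => qq (hvD i j)) (h+1)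
  have e4 : (∑ x : Fin (h+1), ∑ y : Fin (2*h), qq (hvD (y:ℕ) (x:ℕ))) = FQ h := by
    rw [← e3]
    exact Finset.sum_comm
  have e5 : (∑ x : Fin (h+1), ∑ y : Fin (h+1),
      if (x:ℕ) = (y:ℕ) then (0:ℚ) else qq (2*Nat.dist (x:ℕ) (y:ℕ) + 1)) = BvQ (h+1) := by
    rw [Fin.sum_univ_eq_sum_range
      (fun i => ∑ y : Fin (h+1), if i = (y:ℕ) then (0:ℚ) else qq (2*Nat.dist i (y:ℕ) + 1))]
    exact Finset.sum_congr rfl fun i _ => Fin.sum_univ_eq_sum_range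
      (fun j => if i = j then (0:ℚ) else qq (2*Nat.dist i j + 1)) (h+1)
  rw [e1, e2, e3, e4, e5]
  ring

theorem main (h : ℕ) :
    edgeHyperWienerLine (polyacene h) =
      (h : ℚ) * (25 * (h : ℚ) ^ 3 + 71 * (h : ℚ) ^ 2 + 77 * (h : ℚ) + 79) / 6 := by
  unfold edgeHyperWienerLine
  rw [← add_div, ← Finset.sum_add_distrib]
  rw [offDiag_sum' _ inferInstance]
  rw [sum2_equiv' (inferInstance) _ (sigma h)]
  trans ((∑ x : I h, ∑ y : I h, if x = y then (0:ℚ) else qq (DL x y)) / 4)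
  · congr 1
    refine Finset.sum_congr rfl fun x _ => ?_
    refine Finset.sum_congr rfl fun y _ => ?_
    dsimp only
    by_cases hxy : x = y
    · rw [if_pos (congrArg (sigma h) hxy), if_pos hxy]
    · rw [if_neg (fun hc => hxy ((sigma h).injective hc)), if_neg hxy, lineDist' x y hxy]
      unfold qq; ring
  · rw [blocks, total_cf]; ring


end Poly

/-- For every `h ≥ 1`, the edge-hyper-Wiener index of the linear polyacene
`L_h` satisfies `WW_e(L_h) = h(25h³ + 71h² + 77h + 79)/6`. -/
theorem edgeHyperWiener_polyacene (h : ℕ) (hh : 1 ≤ h) :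
    edgeHyperWienerLine (polyacene h) =
      (h : ℚ) * (25 * (h : ℚ) ^ 3 + 71 * (h : ℚ) ^ 2 + 77 * (h : ℚ) + 79) / 6 := by
  exact Poly.main h
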